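/- arXiv:2007.15918 — 3 statements merged into one kernel-verified Lean document; each statement's English description precedes it below -/
import Mathlib

section
/- Let T > 0, τ ∈ (0, T), and a, b > 0. Suppose y : [0, T) → [0, ∞) is absolutely continuous and satisfies y'(t) + a·y(t) ≤ h(t) for almost every t ∈ (0, T), where h : [0, T) → [0, ∞) is nonnegative, locally integrable, and satisfies ∫_t^{t+τ} h(s) ds ≤ b for all t ∈ [0, T − τ). Then y(t) ≤ max{ y(0) + b , b/(aτ) + 2b } for all t ∈ [0, T). -/
open MeasureTheory Set

/-- Absorption lemma for differential inequalities: if `y : [0,T) → [0,∞)` is absolutely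
continuous (encoded via a locally integrable a.e. derivative `y'` and the fundamental
theorem of calculus representation) with `y' + a·y ≤ h` a.e. on `(0,T)`, where `h ≥ 0` is
locally integrable with `∫_t^{t+τ} h ≤ b` for all `t ∈ [0, T-τ)`, then
`y(t) ≤ max{y(0)+b, b/(aτ)+2b}` on `[0,T)`. -/
theorem stmt0 (T τ a b : ℝ) (hT : 0 < T) (hτ : τ ∈ Set.Ioo 0 T)
    (ha : 0 < a) (hb : 0 < b)
    (y y' h : ℝ → ℝ)
    (hy_nonneg : ∀ t ∈ Set.Ico (0:ℝ) T, 0 ≤ y t)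
    (hy'_loc : MeasureTheory.LocallyIntegrableOn y' (Set.Ico 0 T))
    (hy_ac : ∀ s ∈ Set.Ico (0:ℝ) T, ∀ t ∈ Set.Ico (0:ℝ) T,
      y t - y s = ∫ u in s..t, y' u)
    (hderiv : ∀ᵐ t ∂(MeasureTheory.volume.restrict (Set.Ioo (0:ℝ) T)),
      y' t + a * y t ≤ h t)
    (hh_nonneg : ∀ t ∈ Set.Ico (0:ℝ) T, 0 ≤ h t)
    (hh_loc : MeasureTheory.LocallyIntegrableOn h (Set.Ico 0 T))
    (hh_int : ∀ t ∈ Set.Ico (0:ℝ) (T - τ), (∫ s in t..(t + τ), h s) ≤ b) :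
    ∀ t ∈ Set.Ico (0:ℝ) T, y t ≤ max (y 0 + b) (b / (a * τ) + 2 * b) := by
  obtain ⟨hτ0, hτT⟩ := hτ
  set M := max (y 0 + b) (b / (a * τ) + 2 * b) with hMdef
  have hM1 : y 0 + b ≤ M := le_max_left _ _
  have hM2 : b / (a * τ) + 2 * b ≤ M := le_max_right _ _
  intro t₁ ht₁
  by_contra hcon
  push_neg at hcon
  have ht₁0 : (0:ℝ) ≤ t₁ := ht₁.1
  have ht₁T : t₁ < T := ht₁.2
  -- integrability on compact subintervals
  have hsubIcc : ∀ s t : ℝ, 0 ≤ s → t < T → Icc s t ⊆ Ico 0 T := by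
    intro s t hs htT u hu
    exact ⟨hs.trans hu.1, lt_of_le_of_lt hu.2 htT⟩
  have hint_h : ∀ s t : ℝ, 0 ≤ s → t < T → IntegrableOn h (Icc s t) := fun s t hs htT =>
    hh_loc.integrableOn_compact_subset (hsubIcc s t hs htT) isCompact_Icc
  have hint_y' : ∀ s t : ℝ, 0 ≤ s → t < T → IntegrableOn y' (Icc s t) := fun s t hs htT =>
    hy'_loc.integrableOn_compact_subset (hsubIcc s t hs htT) isCompact_Icc
  -- continuity of y on [0, t₁]
  have hycont : ContinuousOn y (Icc 0 t₁) := by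
    have hprim : ContinuousOn (fun x => ∫ u in Ioc (0:ℝ) x, y' u) (Icc 0 t₁) :=
      intervalIntegral.continuousOn_primitive (hint_y' 0 t₁ le_rfl ht₁T)
    have hcont2 : ContinuousOn (fun x => y 0 + ∫ u in Ioc (0:ℝ) x, y' u) (Icc 0 t₁) :=
      continuousOn_const.add hprim
    refine hcont2.congr ?_
    intro x hx
    have hx' : x ∈ Ico (0:ℝ) T := ⟨hx.1, lt_of_le_of_lt hx.2 ht₁T⟩
    have := hy_ac 0 ⟨le_rfl, hT⟩ x hx'
    rw [intervalIntegral.integral_of_le hx.1] at this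
    simp only [Pi.add_apply]
    linarith
  have hyint : ∀ s t : ℝ, 0 ≤ s → t ≤ t₁ → IntegrableOn y (Ioc s t) := by
    intro s t hs htt
    rcases le_or_gt s t with hst | hst
    · exact ((hycont.mono (Icc_subset_Icc hs htt)).integrableOn_Icc).mono_set Ioc_subset_Icc_self
    · simp [Ioc_eq_empty (not_lt.mpr hst.le)]
  -- key integral inequality
  have key : ∀ s t : ℝ, 0 ≤ s → s ≤ t → t ≤ t₁ →
      y t ≤ y s + (∫ u in Ioc s t, h u) - a * ∫ u in Ioc s t, y u := by
    intro s t hs hst htt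
    have htT : t < T := lt_of_le_of_lt htt ht₁T
    have hsub : Ioc s t ⊆ Ioo 0 T := fun u hu =>
      ⟨lt_of_le_of_lt hs hu.1, lt_of_le_of_lt hu.2 htT⟩
    have hae : ∀ᵐ u ∂(volume.restrict (Ioc s t)), y' u ≤ h u - a * y u := by
      filter_upwards [ae_restrict_of_ae_restrict_of_subset hsub hderiv] with u hu
      linarith
    have hy'i : IntegrableOn y' (Ioc s t) :=
      (hint_y' s t hs htT).mono_set Ioc_subset_Icc_self
    have hyi : IntegrableOn y (Ioc s t) := hyint s t hs htt
    have hhi : IntegrableOn h (Ioc s t) :=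
      (hint_h s t hs htT).mono_set Ioc_subset_Icc_self
    have heq : y t - y s = ∫ u in Ioc s t, y' u := by
      rw [hy_ac s ⟨hs, lt_of_le_of_lt hst htT⟩ t ⟨hs.trans hst, htT⟩,
        intervalIntegral.integral_of_le hst]
    have hmono : (∫ u in Ioc s t, y' u) ≤ ∫ u in Ioc s t, (h u - a * y u) :=
      setIntegral_mono_ae_restrict hy'i (hhi.sub (hyi.const_mul a)) hae
    rw [integral_sub hhi (hyi.const_mul a), integral_const_mul] at hmono
    linarith
  -- window bound for h
  have hwin : ∀ s t : ℝ, 0 ≤ s → s ≤ t → t ≤ t₁ → t - s ≤ τ →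
      (∫ u in Ioc s t, h u) ≤ b := by
    intro s t hs hst htt hlen
    have htT : t < T := lt_of_le_of_lt htt ht₁T
    set s' := max 0 (t - τ) with hs'def
    have hs'0 : 0 ≤ s' := le_max_left _ _
    have hs's : s' ≤ s := max_le hs (by linarith)
    have hts' : t ≤ s' + τ := by
      have : t - τ ≤ s' := le_max_right _ _
      linarith
    have hs'T : s' < T - τ := by
      rcases le_or_gt (t - τ) 0 with hc | hc
      · rw [hs'def, max_eq_left hc]; linarith
      · rw [hs'def, max_eq_right hc.le]; linarith
    have hbig : IntegrableOn h (Ioc s' (s' + τ)) :=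
      (hint_h s' (s' + τ) hs'0 (by linarith)).mono_set Ioc_subset_Icc_self
    have hpos : 0 ≤ᵐ[volume.restrict (Ioc s' (s' + τ))] h := by
      filter_upwards [ae_restrict_mem measurableSet_Ioc] with u hu
      exact hh_nonneg u ⟨hs'0.trans hu.1.le, lt_of_le_of_lt hu.2 (by linarith)⟩
    have hss : Ioc s t ⊆ Ioc s' (s' + τ) := fun u hu =>
      ⟨lt_of_le_of_lt hs's hu.1, hu.2.trans hts'⟩
    have hmono := setIntegral_mono_set hbig hpos (HasSubset.Subset.eventuallyLE hss)
    have hb' := hh_int s' ⟨hs'0, hs'T⟩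
    rw [intervalIntegral.integral_of_le (by linarith : s' ≤ s' + τ)] at hb'
    exact hmono.trans hb'
  -- nonnegativity of integrals of y
  have hynn : ∀ s t : ℝ, 0 ≤ s → t ≤ t₁ → 0 ≤ ∫ u in Ioc s t, y u := by
    intro s t hs htt
    refine setIntegral_nonneg measurableSet_Ioc fun u hu => ?_
    exact hy_nonneg u ⟨hs.trans hu.1.le, lt_of_le_of_lt (hu.2.trans htt) ht₁T⟩
  -- the sup of the "small" set
  set S := {s : ℝ | s ∈ Icc 0 t₁ ∧ y s ≤ M - b} with hSdef
  have h0S : (0:ℝ) ∈ S := ⟨⟨le_rfl, ht₁0⟩, by linarith⟩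
  have hSne : S.Nonempty := ⟨0, h0S⟩
  have hSbdd : BddAbove S := ⟨t₁, fun x hx => hx.1.2⟩
  have hSclosed : IsClosed S := by
    have : S = Icc 0 t₁ ∩ y ⁻¹' Iic (M - b) := by
      ext x; simp [hSdef, and_comm]
    rw [this]
    exact hycont.preimage_isClosed_of_isClosed isClosed_Icc isClosed_Iic
  set s₁ := sSup S with hs₁def
  have hs₁S : s₁ ∈ S := hSclosed.csSup_mem hSne hSbdd
  have hs₁0 : 0 ≤ s₁ := hs₁S.1.1
  have hs₁t₁ : s₁ ≤ t₁ := hs₁S.1.2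
  have hs₁y : y s₁ ≤ M - b := hs₁S.2
  have hs₁lt : s₁ < t₁ := by
    rcases eq_or_lt_of_le hs₁t₁ with heq | hlt
    · exfalso; rw [heq] at hs₁y; linarith
    · exact hlt
  have habove : ∀ u, s₁ < u → u ≤ t₁ → M - b < y u := by
    intro u h1 h2
    by_contra h3
    push_neg at h3
    have : u ∈ S := ⟨⟨hs₁0.trans h1.le, h2⟩, h3⟩
    exact absurd (le_csSup hSbdd this) (not_le.mpr h1)
  -- one-step bound
  have hstep1 : ∀ t, s₁ < t → t ≤ t₁ → t ≤ s₁ + τ → y t ≤ M := by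
    intro t h1 h2 h3
    have hk := key s₁ t hs₁0 h1.le h2
    have hw := hwin s₁ t hs₁0 h1.le h2 (by linarith)
    have hy0 := hynn s₁ t hs₁0 h2
    nlinarith [ha.le]
  -- descent induction
  have hdesc : ∀ n : ℕ, ∀ t, s₁ < t → t ≤ t₁ → t ≤ s₁ + (n + 1) * τ → y t ≤ M := by
    intro n
    induction n with
    | zero =>
      intro t h1 h2 h3
      exact hstep1 t h1 h2 (by push_cast at h3; linarith)
    | succ n ih =>
      intro t h1 h2 h3
      rcases le_or_gt t (s₁ + τ) with hc | hc
      · exact hstep1 t h1 h2 hc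
      · have h4 : s₁ < t - τ := by linarith
        have ihm : y (t - τ) ≤ M := by
          refine ih (t - τ) h4 (by linarith) ?_
          push_cast at h3 ⊢
          linarith
        have h5 : 0 ≤ t - τ := by linarith
        have hk := key (t - τ) t h5 (by linarith) h2
        have hw := hwin (t - τ) t h5 (by linarith) h2 (by linarith)
        have hylow : (M - b) * τ ≤ ∫ u in Ioc (t - τ) t, y u := by
          have hconst : ∫ _u in Ioc (t - τ) t, (M - b) = (M - b) * τ := by
            rw [setIntegral_const, measureReal_def, Real.volume_Ioc]
            rw [ENNReal.toReal_ofReal (by linarith : (0:ℝ) ≤ t - (t - τ))]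
            rw [smul_eq_mul]; ring
          rw [← hconst]
          refine setIntegral_mono_on ((integrableOn_const_iff (C := M - b)).mpr ?_)
            (hyint (t - τ) t h5 h2) measurableSet_Ioc ?_
          · right; rw [Real.volume_Ioc]; exact ENNReal.ofReal_lt_top
          · intro u hu
            exact (habove u (lt_trans h4 hu.1) (hu.2.trans h2)).le
        have haτ : 0 < a * τ := mul_pos ha hτ0
        have hMb : b / (a * τ) + b ≤ M - b := by linarith
        have hdiv : a * τ * (b / (a * τ)) = b := by field_simp
        have hblow : b ≤ a * ((M - b) * τ) := by nlinarith
        have h7 : b ≤ a * ∫ u in Ioc (t - τ) t, y u :=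
          hblow.trans (mul_le_mul_of_nonneg_left hylow ha.le)
        linarith
  -- conclude
  obtain ⟨n, hn⟩ := exists_nat_ge ((t₁ - s₁) / τ)
  have hfin : t₁ ≤ s₁ + (n + 1) * τ := by
    rw [div_le_iff₀ hτ0] at hn
    nlinarith
  exact absurd (hdesc n t₁ hs₁lt le_rfl hfin) (not_le.mpr hcon)
end

section
/- Let ϖ₁, ϖ₂, a₂, b₁, λ, k, l, δ be real numbers with a₂, b₁, λ, k, l, δ > 0, ϖ₁ > 0, ϖ₁ϖ₂ > a₂b₁, and δ·(b₁l²ϖ₁ + a₂k²ϖ₂ − 2a₂b₁kl) < 4λa₂(ϖ₁ϖ₂ − a₂b₁). Then the real symmetric 3×3 matrix P with rows (ϖ₁, a₂, −kδ/2), (a₂, a₂ϖ₂/b₁, −lδ/2), (−kδ/2, −lδ/2, λδ) is positive definite. -/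
open Matrix

set_option maxHeartbeats 1000000

lemma stmt10_aux_pos (A p D Q u v z : ℝ) (hA : 0 < A) (hp : 0 < p) (hD : 0 < D)
    (hid : A*p*Q = A*u^2 + v^2 + p*D*z^2)
    (hnz : u ≠ 0 ∨ v ≠ 0 ∨ z ≠ 0) : 0 < Q := by
  have h : 0 < A*p*Q := by
    rw [hid]
    rcases hnz with h | h | h
    · have h2 : 0 < u^2 := by positivity
      nlinarith [sq_nonneg v, mul_pos hA h2, mul_nonneg (mul_nonneg hp.le hD.le) (sq_nonneg z)]
    · have h2 : 0 < v^2 := by positivity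
      nlinarith [mul_nonneg hA.le (sq_nonneg u), mul_nonneg (mul_nonneg hp.le hD.le) (sq_nonneg z)]
    · have h2 : 0 < z^2 := by positivity
      nlinarith [mul_nonneg hA.le (sq_nonneg u), sq_nonneg v, mul_pos (mul_pos hp hD) h2]
  nlinarith [mul_pos hA hp]

lemma stmt10_key_pos (ϖ₁ ϖ₂ a₂ b₁ lam k l δ x y z : ℝ)
    (ha₂ : 0 < a₂) (hb₁ : 0 < b₁) (hδ : 0 < δ) (hϖ₁ : 0 < ϖ₁) (hprod : ϖ₁ * ϖ₂ > a₂ * b₁)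
    (hdet : δ * (b₁ * l ^ 2 * ϖ₁ + a₂ * k ^ 2 * ϖ₂ - 2 * a₂ * b₁ * k * l)
      < 4 * lam * a₂ * (ϖ₁ * ϖ₂ - a₂ * b₁))
    (h3 : x ≠ 0 ∨ y ≠ 0 ∨ z ≠ 0) :
    0 < ϖ₁*x^2 + (a₂*ϖ₂/b₁)*y^2 + lam*δ*z^2 + 2*a₂*x*y - k*δ*x*z - l*δ*y*z := by
  have hA : 0 < ϖ₁*(a₂*ϖ₂/b₁) - a₂^2 := by
    have := div_pos (mul_pos (sub_pos.2 hprod) ha₂) hb₁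
    field_simp; nlinarith
  have hD : 0 < (δ/(4*b₁))*(4*lam*a₂*(ϖ₁*ϖ₂-a₂*b₁) - δ*(b₁*l^2*ϖ₁ + a₂*k^2*ϖ₂ - 2*a₂*b₁*k*l)) := by
    have h1 : 0 < δ/(4*b₁) := by positivity
    nlinarith
  refine stmt10_aux_pos (ϖ₁*(a₂*ϖ₂/b₁) - a₂^2) ϖ₁
    ((δ/(4*b₁))*(4*lam*a₂*(ϖ₁*ϖ₂-a₂*b₁) - δ*(b₁*l^2*ϖ₁ + a₂*k^2*ϖ₂ - 2*a₂*b₁*k*l)))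
    _ (ϖ₁*x + a₂*y + (-(k*δ)/2)*z)
    ((ϖ₁*(a₂*ϖ₂/b₁) - a₂^2)*y + (ϖ₁*(-(l*δ)/2) - a₂*(-(k*δ)/2))*z) z
    hA hϖ₁ hD (by field_simp; ring) ?_
  by_contra hc
  push_neg at hc
  obtain ⟨hu, hv, hz⟩ := hc
  subst hz
  have hy : y = 0 := by
    rcases eq_or_ne y 0 with h | h
    · exact h
    · exact absurd (by linarith : (ϖ₁*(a₂*ϖ₂/b₁) - a₂^2)*y = 0) (mul_ne_zero hA.ne' h)
  subst hy
  have hx : x = 0 := by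
    rcases eq_or_ne x 0 with h | h
    · exact h
    · exact absurd (by linarith : ϖ₁*x = 0) (mul_ne_zero hϖ₁.ne' h)
  subst hx
  simp at h3

/-- The matrix `P` of the Lyapunov functional estimate is positive definite under the
conditions `ϖ₁ > 0`, `ϖ₁ϖ₂ > a₂b₁` and `δ(b₁l²ϖ₁ + a₂k²ϖ₂ − 2a₂b₁kl) < 4λa₂(ϖ₁ϖ₂ − a₂b₁)`. -/
theorem stmt10 (ϖ₁ ϖ₂ a₂ b₁ lam k l δ : ℝ)
    (ha₂ : 0 < a₂) (hb₁ : 0 < b₁) (hlam : 0 < lam) (hk : 0 < k) (hl : 0 < l)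
    (hδ : 0 < δ) (hϖ₁ : 0 < ϖ₁) (hprod : ϖ₁ * ϖ₂ > a₂ * b₁)
    (hdet : δ * (b₁ * l ^ 2 * ϖ₁ + a₂ * k ^ 2 * ϖ₂ - 2 * a₂ * b₁ * k * l)
      < 4 * lam * a₂ * (ϖ₁ * ϖ₂ - a₂ * b₁)) :
    (!![ϖ₁, a₂, -(k * δ) / 2;
        a₂, a₂ * ϖ₂ / b₁, -(l * δ) / 2;
        -(k * δ) / 2, -(l * δ) / 2, lam * δ] : Matrix (Fin 3) (Fin 3) ℝ).PosDef := by
  rw [Matrix.posDef_iff_dotProduct_mulVec]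
  constructor
  · rw [Matrix.IsHermitian]
    ext i j
    fin_cases i <;> fin_cases j <;> simp [Matrix.conjTranspose_apply]
  · intro v hv
    have h3 : v 0 ≠ 0 ∨ v 1 ≠ 0 ∨ v 2 ≠ 0 := by
      by_contra h
      push_neg at h
      exact hv (by ext i; fin_cases i <;> simp [h.1, h.2.1, h.2.2])
    have key := stmt10_key_pos ϖ₁ ϖ₂ a₂ b₁ lam k l δ (v 0) (v 1) (v 2)
      ha₂ hb₁ hδ hϖ₁ hprod hdet h3
    simp only [dotProduct, Matrix.mulVec, Fin.sum_univ_three, Matrix.cons_val_zero,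
      Matrix.cons_val_one, Matrix.head_cons, Matrix.cons_val', Matrix.empty_val',
      Matrix.cons_val_fin_one, Matrix.head_fin_const, Matrix.cons_val_two, Matrix.tail_cons,
      star_trivial, Matrix.of_apply]
    nlinarith [key]
end

section
/- Fix positive real numbers a₀, a₂, a₃, a₄, b₀, b₁, b₃, b₄, M, d₁, d₂, d₃, χ₁, χ₂, λ, k, l. For a₁, b₂ > 0 with D(a₁, b₂) := (b₂ + b₄M)(a₁ + a₃M) − (a₂ + a₄M)(b₁ + b₃M) > 0, define u*(a₁, b₂) := (a₀(b₂ + b₄M) − b₀(a₂ + a₄M))/D(a₁, b₂) and v*(a₁, b₂) := (b₀(a₁ + a₃M) − a₀(b₁ + b₃M))/D(a₁, b₂). Then u*(a₁, b₂) → 0 and v*(a₁, b₂) → 0 as a₁ → ∞ and b₂ → ∞ jointly, and there exists A > 0 such that for all a₁ ≥ A and b₂ ≥ A the following hold: (b₁ + b₃M)/(a₁ + a₃M) < b₀/a₀ < (b₂ + b₄M)/(a₂ + a₄M), b₁l²ϖ₁ + a₂k²ϖ₂ > 2a₂b₁kl, and ϖ₁ϖ₂ > a₂b₁ + (b₁l²ϖ₁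 + a₂k²ϖ₂ − 2a₂b₁kl)·ϖ₃, where ϖ₁ := a₁ − a₄M − b₃M, ϖ₂ := b₂ − a₄M − b₃M, and ϖ₃ := (d₁a₂χ₂²·v*(a₁, b₂) + d₂b₁χ₁²·u*(a₁, b₂))/(16d₁d₂d₃a₂b₁λ). -/
open Filter

/-- Determinant `D(a₁,b₂)` of the equilibrium system, as a function of the local
intraspecific competition strengths `a₁` and `b₂`. -/
noncomputable def eqD (a₂ a₃ a₄ b₁ b₃ b₄ M a₁ b₂ : ℝ) : ℝ :=
  (b₂ + b₄ * M) * (a₁ + a₃ * M) - (a₂ + a₄ * M) * (b₁ + b₃ * M)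

/-- First coordinate `u*(a₁,b₂)` of the positive constant equilibrium. -/
noncomputable def eqUStar (a₀ a₂ a₃ a₄ b₀ b₁ b₃ b₄ M a₁ b₂ : ℝ) : ℝ :=
  (a₀ * (b₂ + b₄ * M) - b₀ * (a₂ + a₄ * M)) / eqD a₂ a₃ a₄ b₁ b₃ b₄ M a₁ b₂

/-- Second coordinate `v*(a₁,b₂)` of the positive constant equilibrium. -/
noncomputable def eqVStar (a₀ a₂ a₃ a₄ b₀ b₁ b₃ b₄ M a₁ b₂ : ℝ) : ℝ :=
  (b₀ * (a₁ + a₃ * M) - a₀ * (b₁ + b₃ * M)) / eqD a₂ a₃ a₄ b₁ b₃ b₄ M a₁ b₂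

private lemma sqrt_le_imp_le_sq {x A : ℝ} (hx : 0 ≤ x) (h : Real.sqrt x ≤ A) : x ≤ A ^ 2 := by
  nlinarith [Real.sq_sqrt hx, Real.sqrt_nonneg x]

set_option maxHeartbeats 1000000 in
lemma stmt16_aux (a₀ a₂ a₃ a₄ b₀ b₁ b₃ b₄ M d₁ d₂ d₃ χ₁ χ₂ lam k l : ℝ)
    (ha₀ : 0 < a₀) (ha₂ : 0 < a₂) (ha₃ : 0 < a₃) (ha₄ : 0 < a₄)
    (hb₀ : 0 < b₀) (hb₁ : 0 < b₁) (hb₃ : 0 < b₃) (hb₄ : 0 < b₄)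
    (hM : 0 < M) (hd₁ : 0 < d₁) (hd₂ : 0 < d₂) (hd₃ : 0 < d₃)
    (hχ₁ : 0 < χ₁) (hχ₂ : 0 < χ₂) (hlam : 0 < lam) (hk : 0 < k) (hl : 0 < l) :
    ∃ A : ℝ, 0 < A ∧ ∀ a₁ b₂ : ℝ, A ≤ a₁ → A ≤ b₂ →
      (0 ≤ eqUStar a₀ a₂ a₃ a₄ b₀ b₁ b₃ b₄ M a₁ b₂ ∧
       eqUStar a₀ a₂ a₃ a₄ b₀ b₁ b₃ b₄ M a₁ b₂ * a₁ ≤ 4 * a₀ ∧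
       0 ≤ eqVStar a₀ a₂ a₃ a₄ b₀ b₁ b₃ b₄ M a₁ b₂ ∧
       eqVStar a₀ a₂ a₃ a₄ b₀ b₁ b₃ b₄ M a₁ b₂ * b₂ ≤ 4 * b₀) ∧
      ((b₁ + b₃ * M) / (a₁ + a₃ * M) < b₀ / a₀ ∧
        b₀ / a₀ < (b₂ + b₄ * M) / (a₂ + a₄ * M)) ∧
      (b₁ * l ^ 2 * (a₁ - a₄ * M - b₃ * M) + a₂ * k ^ 2 * (b₂ - a₄ * M - b₃ * M)
        > 2 * a₂ * b₁ * k * l) ∧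
      ((a₁ - a₄ * M - b₃ * M) * (b₂ - a₄ * M - b₃ * M)
        > a₂ * b₁
          + (b₁ * l ^ 2 * (a₁ - a₄ * M - b₃ * M)
              + a₂ * k ^ 2 * (b₂ - a₄ * M - b₃ * M) - 2 * a₂ * b₁ * k * l)
            * ((d₁ * a₂ * χ₂ ^ 2 * eqVStar a₀ a₂ a₃ a₄ b₀ b₁ b₃ b₄ M a₁ b₂
                + d₂ * b₁ * χ₁ ^ 2 * eqUStar a₀ a₂ a₃ a₄ b₀ b₁ b₃ b₄ M a₁ b₂)
              / (16 * d₁ * d₂ * d₃ * a₂ * b₁ * lam))) := by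
  set c₁ : ℝ := d₁ * a₂ * χ₂ ^ 2 with hc₁def
  set c₂ : ℝ := d₂ * b₁ * χ₁ ^ 2 with hc₂def
  set C₀ : ℝ := 16 * d₁ * d₂ * d₃ * a₂ * b₁ * lam with hC₀def
  have hc₁ : 0 < c₁ := by rw [hc₁def]; positivity
  have hc₂ : 0 < c₂ := by rw [hc₂def]; positivity
  have hC₀ : 0 < C₀ := by rw [hC₀def]; positivity
  set Kn : ℝ := 4 * (b₁ * l ^ 2 * c₁ * b₀ + b₁ * l ^ 2 * c₂ * a₀
      + a₂ * k ^ 2 * c₁ * b₀ + a₂ * k ^ 2 * c₂ * a₀) with hKndef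
  have hKn : 0 < Kn := by rw [hKndef]; positivity
  set A : ℝ := 1 + (a₂ + a₄ * M) + 2 * (b₁ + b₃ * M) + b₄ * M + a₃ * M
      + b₀ * (a₂ + a₄ * M) / a₀ + a₀ * (b₁ + b₃ * M) / b₀ + 2 * (a₄ * M + b₃ * M)
      + 4 * a₂ * k / l + Real.sqrt (16 * Kn / C₀) + Real.sqrt (16 * a₂ * b₁) with hAdef
  have hs1 : (0:ℝ) ≤ Real.sqrt (16 * Kn / C₀) := Real.sqrt_nonneg _
  have hs2 : (0:ℝ) ≤ Real.sqrt (16 * a₂ * b₁) := Real.sqrt_nonneg _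
  have hq1 : (0:ℝ) ≤ b₀ * (a₂ + a₄ * M) / a₀ := by positivity
  have hq2 : (0:ℝ) ≤ a₀ * (b₁ + b₃ * M) / b₀ := by positivity
  have hq3 : (0:ℝ) ≤ 4 * a₂ * k / l := by positivity
  have hn1 : (0:ℝ) ≤ a₂ + a₄ * M := by positivity
  have hn2 : (0:ℝ) ≤ 2 * (b₁ + b₃ * M) := by positivity
  have hn3 : (0:ℝ) ≤ b₄ * M := by positivity
  have hn4 : (0:ℝ) ≤ a₃ * M := by positivity
  have hn5 : (0:ℝ) ≤ 2 * (a₄ * M + b₃ * M) := by positivity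
  clear_value c₁ c₂ C₀ Kn A
  have hApos : 0 < A := by rw [hAdef]; linarith
  refine ⟨A, hApos, fun a₁ b₂ hA1 hA2 => ?_⟩
  have hAa : a₂ + a₄ * M ≤ A := by rw [hAdef]; linarith
  have hAb : 2 * (b₁ + b₃ * M) ≤ A := by rw [hAdef]; linarith
  have hAb4 : b₄ * M ≤ A := by rw [hAdef]; linarith
  have hAa3 : a₃ * M ≤ A := by rw [hAdef]; linarith
  have hAu : b₀ * (a₂ + a₄ * M) / a₀ ≤ A := by rw [hAdef]; linarith
  have hAv : a₀ * (b₁ + b₃ * M) / b₀ ≤ A := by rw [hAdef]; linarith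
  have hAR : 2 * (a₄ * M + b₃ * M) ≤ A := by rw [hAdef]; linarith
  have hAk : 4 * a₂ * k / l + 1 ≤ A := by rw [hAdef]; linarith
  have hAK' : Real.sqrt (16 * Kn / C₀) ≤ A := by rw [hAdef]; linarith
  have hAT' : Real.sqrt (16 * a₂ * b₁) ≤ A := by rw [hAdef]; linarith
  have hAK : 16 * Kn ≤ A ^ 2 * C₀ := by
    have h := sqrt_le_imp_le_sq (show (0:ℝ) ≤ 16 * Kn / C₀ by positivity) hAK'
    exact (div_le_iff₀ hC₀).mp h
  have hAT : 16 * a₂ * b₁ ≤ A ^ 2 :=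
    sqrt_le_imp_le_sq (by positivity) hAT'
  have ha1 : 0 < a₁ := lt_of_lt_of_le hApos hA1
  have hb2 : 0 < b₂ := lt_of_lt_of_le hApos hA2
  have hab : A ^ 2 ≤ a₁ * b₂ := by
    rw [pow_two]; exact mul_le_mul hA1 hA2 hApos.le ha1.le
  -- translated divisions
  have hx1 : b₀ * (a₂ + a₄ * M) ≤ A * a₀ := (div_le_iff₀ ha₀).mp hAu
  have hx2 : a₀ * (b₁ + b₃ * M) ≤ A * b₀ := (div_le_iff₀ hb₀).mp hAv
  have hx3 : A * a₀ ≤ b₂ * a₀ := mul_le_mul_of_nonneg_right hA2 ha₀.le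
  have hx4 : A * b₀ ≤ a₁ * b₀ := mul_le_mul_of_nonneg_right hA1 hb₀.le
  -- determinant bound
  have hDval : eqD a₂ a₃ a₄ b₁ b₃ b₄ M a₁ b₂
      = (b₂ + b₄ * M) * (a₁ + a₃ * M) - (a₂ + a₄ * M) * (b₁ + b₃ * M) := rfl
  have hy1 : (a₂ + a₄ * M) * (b₁ + b₃ * M) ≤ a₁ * (b₂ / 2) :=
    mul_le_mul (hAa.trans hA1) (by linarith) (by positivity) ha1.le
  have hy2 : a₁ * b₂ ≤ (b₂ + b₄ * M) * (a₁ + a₃ * M) := by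
    have p1 : (0:ℝ) ≤ b₂ * (a₃ * M) := by positivity
    have p2 : (0:ℝ) ≤ b₄ * M * a₁ := by positivity
    have p3 : (0:ℝ) ≤ b₄ * M * (a₃ * M) := by positivity
    linarith [p1, p2, p3]
  have hD : a₁ * b₂ / 2 ≤ eqD a₂ a₃ a₄ b₁ b₃ b₄ M a₁ b₂ := by
    rw [hDval]; linarith [hy1, hy2]
  have habp : 0 < a₁ * b₂ := mul_pos ha1 hb2
  have hDpos : 0 < eqD a₂ a₃ a₄ b₁ b₃ b₄ M a₁ b₂ := by linarith
  -- numerator bounds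
  have hz1 : (0:ℝ) ≤ a₀ * (b₄ * M) := by positivity
  have hz2 : (0:ℝ) ≤ b₀ * (a₃ * M) := by positivity
  have hNu0 : 0 ≤ a₀ * (b₂ + b₄ * M) - b₀ * (a₂ + a₄ * M) := by linarith [hx1, hx3, hz1]
  have hz3 : a₀ * (b₄ * M) ≤ a₀ * b₂ :=
    mul_le_mul_of_nonneg_left (hAb4.trans hA2) ha₀.le
  have hz4 : b₀ * (a₃ * M) ≤ b₀ * a₁ :=
    mul_le_mul_of_nonneg_left (hAa3.trans hA1) hb₀.le
  have hpos1 : (0:ℝ) ≤ b₀ * (a₂ + a₄ * M) := by positivity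
  have hpos2 : (0:ℝ) ≤ a₀ * (b₁ + b₃ * M) := by positivity
  have hNu1 : a₀ * (b₂ + b₄ * M) - b₀ * (a₂ + a₄ * M) ≤ 2 * a₀ * b₂ := by linarith [hz3, hpos1, habp]
  have hNv0 : 0 ≤ b₀ * (a₁ + a₃ * M) - a₀ * (b₁ + b₃ * M) := by linarith [hx2, hx4, hz2]
  have hNv1 : b₀ * (a₁ + a₃ * M) - a₀ * (b₁ + b₃ * M) ≤ 2 * b₀ * a₁ := by linarith [hz4, hpos2]
  have hu0 : 0 ≤ eqUStar a₀ a₂ a₃ a₄ b₀ b₁ b₃ b₄ M a₁ b₂ := div_nonneg hNu0 hDpos.le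
  have hv0 : 0 ≤ eqVStar a₀ a₂ a₃ a₄ b₀ b₁ b₃ b₄ M a₁ b₂ := div_nonneg hNv0 hDpos.le
  have hu1 : eqUStar a₀ a₂ a₃ a₄ b₀ b₁ b₃ b₄ M a₁ b₂ * a₁ ≤ 4 * a₀ := by
    show (a₀ * (b₂ + b₄ * M) - b₀ * (a₂ + a₄ * M)) / eqD a₂ a₃ a₄ b₁ b₃ b₄ M a₁ b₂ * a₁
        ≤ 4 * a₀
    rw [div_mul_eq_mul_div, div_le_iff₀ hDpos]
    have r1 : (a₀ * (b₂ + b₄ * M) - b₀ * (a₂ + a₄ * M)) * a₁ ≤ 2 * a₀ * b₂ * a₁ :=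
      mul_le_mul_of_nonneg_right hNu1 ha1.le
    have r2 : 4 * a₀ * (a₁ * b₂ / 2) ≤ 4 * a₀ * eqD a₂ a₃ a₄ b₁ b₃ b₄ M a₁ b₂ :=
      mul_le_mul_of_nonneg_left hD (by positivity)
    linarith [r1, r2]
  have hv1 : eqVStar a₀ a₂ a₃ a₄ b₀ b₁ b₃ b₄ M a₁ b₂ * b₂ ≤ 4 * b₀ := by
    show (b₀ * (a₁ + a₃ * M) - a₀ * (b₁ + b₃ * M)) / eqD a₂ a₃ a₄ b₁ b₃ b₄ M a₁ b₂ * b₂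
        ≤ 4 * b₀
    rw [div_mul_eq_mul_div, div_le_iff₀ hDpos]
    have r1 : (b₀ * (a₁ + a₃ * M) - a₀ * (b₁ + b₃ * M)) * b₂ ≤ 2 * b₀ * a₁ * b₂ :=
      mul_le_mul_of_nonneg_right hNv1 hb2.le
    have r2 : 4 * b₀ * (a₁ * b₂ / 2) ≤ 4 * b₀ * eqD a₂ a₃ a₄ b₁ b₃ b₄ M a₁ b₂ :=
      mul_le_mul_of_nonneg_left hD (by positivity)
    linarith [r1, r2]
  -- condition 3 (stated as separate fact since used twice)
  have hw1 : a₁ / 2 ≤ a₁ - a₄ * M - b₃ * M := by linarith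
  have hw2 : b₂ / 2 ≤ b₂ - a₄ * M - b₃ * M := by linarith
  have hkl : 4 * a₂ * k < A * l := by
    have := (div_le_iff₀ hl).mp (show 4 * a₂ * k / l ≤ A - 1 by linarith)
    linarith [this, hl]
  have hcond3 : b₁ * l ^ 2 * (a₁ - a₄ * M - b₃ * M)
      + a₂ * k ^ 2 * (b₂ - a₄ * M - b₃ * M) > 2 * a₂ * b₁ * k * l := by
    have g1 : b₁ * l ^ 2 * (a₁ / 2) ≤ b₁ * l ^ 2 * (a₁ - a₄ * M - b₃ * M) :=
      mul_le_mul_of_nonneg_left hw1 (by positivity)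
    have g2 : b₁ * l ^ 2 * (A / 2) ≤ b₁ * l ^ 2 * (a₁ / 2) :=
      mul_le_mul_of_nonneg_left (by linarith) (by positivity)
    have g3 : b₁ * l / 2 * (4 * a₂ * k) < b₁ * l / 2 * (A * l) :=
      mul_lt_mul_of_pos_left hkl (by positivity)
    have g4 : a₂ * k ^ 2 * (b₂ / 2) ≤ a₂ * k ^ 2 * (b₂ - a₄ * M - b₃ * M) :=
      mul_le_mul_of_nonneg_left hw2 (by positivity)
    have g5 : (0:ℝ) < a₂ * k ^ 2 * (b₂ / 2) := by positivity
    linarith [g1, g2, g3, g4, g5]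
  refine ⟨⟨hu0, hu1, hv0, hv1⟩, ⟨?_, ?_⟩, hcond3, ?_⟩
  · rw [div_lt_div_iff₀ (by positivity) ha₀]
    linarith [hx2, hx4, mul_pos hb₀ (mul_pos ha₃ hM)]
  · rw [div_lt_div_iff₀ ha₀ (by positivity)]
    linarith [hx1, hx3, mul_pos hb₄ (mul_pos hM ha₀)]
  · -- condition 4
    set w₁ : ℝ := a₁ - a₄ * M - b₃ * M with hw1def
    set w₂ : ℝ := b₂ - a₄ * M - b₃ * M with hw2def
    set S : ℝ := b₁ * l ^ 2 * w₁ + a₂ * k ^ 2 * w₂ - 2 * a₂ * b₁ * k * l with hSdef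
    set N : ℝ := c₁ * eqVStar a₀ a₂ a₃ a₄ b₀ b₁ b₃ b₄ M a₁ b₂
        + c₂ * eqUStar a₀ a₂ a₃ a₄ b₀ b₁ b₃ b₄ M a₁ b₂ with hNdef
    have hRp : 0 < a₄ * M + b₃ * M := by positivity
    clear_value w₁ w₂ S N
    have hw1' : w₁ ≤ a₁ := by rw [hw1def]; linarith
    have hw2' : w₂ ≤ b₂ := by rw [hw2def]; linarith
    have hSpos : 0 < S := by rw [hSdef]; linarith [hcond3]
    have hSle : S ≤ b₁ * l ^ 2 * a₁ + a₂ * k ^ 2 * b₂ := by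
      rw [hSdef]
      have g1 : b₁ * l ^ 2 * w₁ ≤ b₁ * l ^ 2 * a₁ :=
        mul_le_mul_of_nonneg_left hw1' (by positivity)
      have g2 : a₂ * k ^ 2 * w₂ ≤ a₂ * k ^ 2 * b₂ :=
        mul_le_mul_of_nonneg_left hw2' (by positivity)
      have hp : (0:ℝ) < 2 * a₂ * b₁ * k * l := by positivity
      linarith [g1, g2]
    have hN0 : 0 ≤ N := by
      rw [hNdef]
      have := mul_nonneg hc₁.le hv0
      have := mul_nonneg hc₂.le hu0
      linarith
    have hNle : N * (a₁ * b₂) ≤ 4 * c₁ * b₀ * a₁ + 4 * c₂ * a₀ * b₂ := by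
      have m1 : c₁ * (eqVStar a₀ a₂ a₃ a₄ b₀ b₁ b₃ b₄ M a₁ b₂ * b₂) ≤ c₁ * (4 * b₀) :=
        mul_le_mul_of_nonneg_left hv1 hc₁.le
      have m2 : c₂ * (eqUStar a₀ a₂ a₃ a₄ b₀ b₁ b₃ b₄ M a₁ b₂ * a₁) ≤ c₂ * (4 * a₀) :=
        mul_le_mul_of_nonneg_left hu1 hc₂.le
      have m3 : c₁ * (eqVStar a₀ a₂ a₃ a₄ b₀ b₁ b₃ b₄ M a₁ b₂ * b₂) * a₁
          ≤ c₁ * (4 * b₀) * a₁ := mul_le_mul_of_nonneg_right m1 ha1.le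
      have m4 : c₂ * (eqUStar a₀ a₂ a₃ a₄ b₀ b₁ b₃ b₄ M a₁ b₂ * a₁) * b₂
          ≤ c₂ * (4 * a₀) * b₂ := mul_le_mul_of_nonneg_right m2 hb2.le
      rw [hNdef]; linarith [m3, m4]
    have hprod : S * N * (a₁ * b₂)
        ≤ (b₁ * l ^ 2 * a₁ + a₂ * k ^ 2 * b₂) * (4 * c₁ * b₀ * a₁ + 4 * c₂ * a₀ * b₂) := by
      have h1 : S * (N * (a₁ * b₂)) ≤ (b₁ * l ^ 2 * a₁ + a₂ * k ^ 2 * b₂)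
          * (4 * c₁ * b₀ * a₁ + 4 * c₂ * a₀ * b₂) :=
        mul_le_mul hSle hNle (mul_nonneg hN0 (by positivity)) (by positivity)
      calc S * N * (a₁ * b₂) = S * (N * (a₁ * b₂)) := by ring
      _ ≤ _ := h1
    have t1 : A ^ 2 * a₁ ^ 2 ≤ (a₁ * b₂) ^ 2 := by
      have h := pow_le_pow_left₀ hApos.le hA2 2
      calc A ^ 2 * a₁ ^ 2 ≤ b₂ ^ 2 * a₁ ^ 2 :=
        mul_le_mul_of_nonneg_right h (sq_nonneg a₁)
      _ = (a₁ * b₂) ^ 2 := by ring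
    have t2 : A ^ 2 * (a₁ * b₂) ≤ (a₁ * b₂) ^ 2 := by
      calc A ^ 2 * (a₁ * b₂) ≤ (a₁ * b₂) * (a₁ * b₂) :=
        mul_le_mul_of_nonneg_right hab (by positivity)
      _ = (a₁ * b₂) ^ 2 := by ring
    have t3 : A ^ 2 * b₂ ^ 2 ≤ (a₁ * b₂) ^ 2 := by
      have h := pow_le_pow_left₀ hApos.le hA1 2
      calc A ^ 2 * b₂ ^ 2 ≤ a₁ ^ 2 * b₂ ^ 2 :=
        mul_le_mul_of_nonneg_right h (sq_nonneg b₂)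
      _ = (a₁ * b₂) ^ 2 := by ring
    have hprod2 : A ^ 2 * ((b₁ * l ^ 2 * a₁ + a₂ * k ^ 2 * b₂)
        * (4 * c₁ * b₀ * a₁ + 4 * c₂ * a₀ * b₂)) ≤ Kn * (a₁ * b₂) ^ 2 := by
      have m1 := mul_le_mul_of_nonneg_left t1
        (show (0:ℝ) ≤ 4 * (b₁ * l ^ 2 * c₁ * b₀) by positivity)
      have m2 := mul_le_mul_of_nonneg_left t2
        (show (0:ℝ) ≤ 4 * (b₁ * l ^ 2 * c₂ * a₀) by positivity)
      have m3 := mul_le_mul_of_nonneg_left t2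
        (show (0:ℝ) ≤ 4 * (a₂ * k ^ 2 * c₁ * b₀) by positivity)
      have m4 := mul_le_mul_of_nonneg_left t3
        (show (0:ℝ) ≤ 4 * (a₂ * k ^ 2 * c₂ * a₀) by positivity)
      rw [hKndef]; linarith [m1, m2, m3, m4]
    have step1 : S * N * (a₁ * b₂) * A ^ 2 ≤ Kn * (a₁ * b₂) ^ 2 := by
      calc S * N * (a₁ * b₂) * A ^ 2 = A ^ 2 * (S * N * (a₁ * b₂)) := by ring
      _ ≤ A ^ 2 * ((b₁ * l ^ 2 * a₁ + a₂ * k ^ 2 * b₂)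
          * (4 * c₁ * b₀ * a₁ + 4 * c₂ * a₀ * b₂)) :=
        mul_le_mul_of_nonneg_left hprod (sq_nonneg A)
      _ ≤ Kn * (a₁ * b₂) ^ 2 := hprod2
    have step2 : 16 * Kn * (a₁ * b₂) ^ 2 ≤ A ^ 2 * C₀ * (a₁ * b₂) ^ 2 :=
      mul_le_mul_of_nonneg_right hAK (sq_nonneg _)
    have hSN' : S * N ≤ C₀ * (a₁ * b₂) / 16 := by
      have hP : (0:ℝ) < 16 * A ^ 2 * (a₁ * b₂) := by positivity
      have key : S * N * (16 * A ^ 2 * (a₁ * b₂))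
          ≤ C₀ * (a₁ * b₂) / 16 * (16 * A ^ 2 * (a₁ * b₂)) := by
        have e1 : S * N * (16 * A ^ 2 * (a₁ * b₂)) = 16 * (S * N * (a₁ * b₂) * A ^ 2) := by
          ring
        have e2 : C₀ * (a₁ * b₂) / 16 * (16 * A ^ 2 * (a₁ * b₂))
            = A ^ 2 * C₀ * (a₁ * b₂) ^ 2 := by ring
        rw [e1, e2]; linarith [step1, step2]
      exact le_of_mul_le_mul_right key hP
    have hdiv : S * (N / C₀) ≤ a₁ * b₂ / 16 := by
      have e : S * (N / C₀) = S * N / C₀ := by ring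
      rw [e, div_le_iff₀ hC₀]
      linarith [hSN']
    have hT : a₂ * b₁ ≤ a₁ * b₂ / 16 := by linarith [hAT, hab]
    have hww : a₁ * b₂ / 4 ≤ w₁ * w₂ := by
      have := mul_le_mul hw1 hw2 (by positivity) (by linarith)
      linarith [this]
    calc a₂ * b₁ + S * (N / C₀) ≤ a₁ * b₂ / 16 + a₁ * b₂ / 16 := by linarith
    _ < a₁ * b₂ / 4 := by linarith [habp]
    _ ≤ w₁ * w₂ := hww

/-- As `a₁ → ∞` and `b₂ → ∞` jointly, `u*(a₁,b₂) → 0` and `v*(a₁,b₂) → 0`, and for all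
sufficiently large `a₁, b₂` the weak competition condition and the two structural
conditions of the stabilization theorem hold. -/
theorem stmt16 (a₀ a₂ a₃ a₄ b₀ b₁ b₃ b₄ M d₁ d₂ d₃ χ₁ χ₂ lam k l : ℝ)
    (ha₀ : 0 < a₀) (ha₂ : 0 < a₂) (ha₃ : 0 < a₃) (ha₄ : 0 < a₄)
    (hb₀ : 0 < b₀) (hb₁ : 0 < b₁) (hb₃ : 0 < b₃) (hb₄ : 0 < b₄)
    (hM : 0 < M) (hd₁ : 0 < d₁) (hd₂ : 0 < d₂) (hd₃ : 0 < d₃)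
    (hχ₁ : 0 < χ₁) (hχ₂ : 0 < χ₂) (hlam : 0 < lam) (hk : 0 < k) (hl : 0 < l) :
    Tendsto (fun q : ℝ × ℝ => eqUStar a₀ a₂ a₃ a₄ b₀ b₁ b₃ b₄ M q.1 q.2)
      (atTop ×ˢ atTop) (nhds 0) ∧
    Tendsto (fun q : ℝ × ℝ => eqVStar a₀ a₂ a₃ a₄ b₀ b₁ b₃ b₄ M q.1 q.2)
      (atTop ×ˢ atTop) (nhds 0) ∧
    ∃ A : ℝ, 0 < A ∧ ∀ a₁ b₂ : ℝ, A ≤ a₁ → A ≤ b₂ →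
      ((b₁ + b₃ * M) / (a₁ + a₃ * M) < b₀ / a₀ ∧
        b₀ / a₀ < (b₂ + b₄ * M) / (a₂ + a₄ * M)) ∧
      (b₁ * l ^ 2 * (a₁ - a₄ * M - b₃ * M) + a₂ * k ^ 2 * (b₂ - a₄ * M - b₃ * M)
        > 2 * a₂ * b₁ * k * l) ∧
      ((a₁ - a₄ * M - b₃ * M) * (b₂ - a₄ * M - b₃ * M)
        > a₂ * b₁
          + (b₁ * l ^ 2 * (a₁ - a₄ * M - b₃ * M)
              + a₂ * k ^ 2 * (b₂ - a₄ * M - b₃ * M) - 2 * a₂ * b₁ * k * l)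
            * ((d₁ * a₂ * χ₂ ^ 2 * eqVStar a₀ a₂ a₃ a₄ b₀ b₁ b₃ b₄ M a₁ b₂
                + d₂ * b₁ * χ₁ ^ 2 * eqUStar a₀ a₂ a₃ a₄ b₀ b₁ b₃ b₄ M a₁ b₂)
              / (16 * d₁ * d₂ * d₃ * a₂ * b₁ * lam))) := by
  obtain ⟨A, hApos, h⟩ := stmt16_aux a₀ a₂ a₃ a₄ b₀ b₁ b₃ b₄ M d₁ d₂ d₃ χ₁ χ₂ lam k l
    ha₀ ha₂ ha₃ ha₄ hb₀ hb₁ hb₃ hb₄ hM hd₁ hd₂ hd₃ hχ₁ hχ₂ hlam hk hl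
  have hev : ∀ᶠ q : ℝ × ℝ in atTop ×ˢ atTop, A ≤ q.1 ∧ A ≤ q.2 :=
    (eventually_ge_atTop A).prod_mk (eventually_ge_atTop A)
  refine ⟨?_, ?_, A, hApos, fun a₁ b₂ h1 h2 => (h a₁ b₂ h1 h2).2⟩
  · apply squeeze_zero' (g := fun q : ℝ × ℝ => 4 * a₀ / q.1)
    · filter_upwards [hev] with q hq
      exact (h q.1 q.2 hq.1 hq.2).1.1
    · filter_upwards [hev] with q hq
      have hq1 : 0 < q.1 := lt_of_lt_of_le hApos hq.1
      exact (le_div_iff₀ hq1).mpr (h q.1 q.2 hq.1 hq.2).1.2.1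
    · exact Tendsto.div_atTop tendsto_const_nhds tendsto_fst
  · apply squeeze_zero' (g := fun q : ℝ × ℝ => 4 * b₀ / q.2)
    · filter_upwards [hev] with q hq
      exact (h q.1 q.2 hq.1 hq.2).1.2.2.1
    · filter_upwards [hev] with q hq
      have hq2 : 0 < q.2 := lt_of_lt_of_le hApos hq.2
      exact (le_div_iff₀ hq2).mpr (h q.1 q.2 hq.1 hq.2).1.2.2.2
    · exact Tendsto.div_atTop tendsto_const_nhds tendsto_snd
end
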